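/- arXiv:2412.10223 — 4 statements merged into one kernel-verified Lean document; each statement's English description precedes it below -/
import Mathlib

section
/- For every integer m ≥ 1 there exists a constant G ∈ ℕ (depending only on m) such that for every n ≥ 1, every subgroup S of V with |S| > G, and every permutation π of V, there exist J ∈ S and I ∈ V with Hamming weight |I| > m such that a^J_I ≠ 0. In other words, no permutation of V can make all the Fourier coefficients of all elements of a sufficiently large subgroup vanish above locality m. -/
open Finset

/-- Hamming weight of an n-bit vector. -/
def wt {n : ℕ} (v : Fin n → ZMod 2) : ℕ :=
  (Finset.univ.filter (fun i => v i = 1)).card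

/-- The sign (-1)^{u·v} ∈ ℝ. -/
noncomputable def sgn {n : ℕ} (u v : Fin n → ZMod 2) : ℝ :=
  if (∑ i, u i * v i) = (1 : ZMod 2) then -1 else 1

/-- Fourier coefficient a^J_I, for a permutation π of V = Fin n → ZMod 2. -/
noncomputable def fc {n : ℕ} (π : Equiv.Perm (Fin n → ZMod 2))
    (J I : Fin n → ZMod 2) : ℝ :=
  (1 / 2 ^ n) * ∑ x : Fin n → ZMod 2, sgn I x * sgn (π x) J

namespace NoLoc
noncomputable def χ2 (a : ZMod 2) : ℝ := if a = 1 then -1 else 1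
lemma zmod2_cases (a : ZMod 2) : a = 0 ∨ a = 1 := by revert a; decide
lemma χ2_zero : χ2 0 = 1 := by simp [χ2]
lemma χ2_one : χ2 1 = -1 := by simp [χ2]
lemma χ2_add (a b : ZMod 2) : χ2 (a + b) = χ2 a * χ2 b := by
  rcases zmod2_cases a with ha | ha <;> rcases zmod2_cases b with hb | hb <;>
    subst ha <;> subst hb <;> norm_num [χ2] <;> decide
noncomputable def ms {ι : Type*} [Fintype ι] (u v : ι → ZMod 2) : ℝ := χ2 (∑ i, u i * v i)
lemma sgn_eq_ms {n : ℕ} (u v : Fin n → ZMod 2) : sgn u v = ms u v := rfl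
lemma ms_comm {ι : Type*} [Fintype ι] (u v : ι → ZMod 2) : ms u v = ms v u := by
  simp [ms, mul_comm]
lemma ms_add_left {ι : Type*} [Fintype ι] (u u' v : ι → ZMod 2) :
    ms (u + u') v = ms u v * ms u' v := by
  simp [ms, add_mul, Finset.sum_add_distrib, χ2_add]
lemma ms_add_right {ι : Type*} [Fintype ι] (u v v' : ι → ZMod 2) :
    ms u (v + v') = ms u v * ms u v' := by
  rw [ms_comm, ms_add_left, ms_comm v u, ms_comm v' u]
lemma ms_zero_left {ι : Type*} [Fintype ι] (v : ι → ZMod 2) : ms 0 v = 1 := by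
  simp [ms, χ2_zero]
lemma ms_values {ι : Type*} [Fintype ι] (u v : ι → ZMod 2) : ms u v = 1 ∨ ms u v = -1 := by
  unfold ms χ2; split <;> simp

lemma sum_ms_left {ι : Type*} [Fintype ι] [DecidableEq ι] (w : ι → ZMod 2) :
    ∑ v : ι → ZMod 2, ms v w = if w = 0 then (Fintype.card (ι → ZMod 2) : ℝ) else 0 := by
  split_ifs with h
  · subst h
    have : ∀ v : ι → ZMod 2, ms v (0 : ι → ZMod 2) = 1 := by
      intro v; rw [ms_comm, ms_zero_left]
    simp [this, Finset.card_univ]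
  · obtain ⟨i, hi⟩ : ∃ i, w i ≠ 0 := by
      by_contra hc; push_neg at hc; exact h (funext fun i => hc i)
    have hwi : w i = 1 := (zmod2_cases (w i)).resolve_left hi
    set J0 : ι → ZMod 2 := Pi.single i 1 with hJ0
    have hd : ms J0 w = -1 := by
      have : ∑ j, J0 j * w j = w i := by
        rw [hJ0]
        rw [Finset.sum_eq_single i]
        · simp
        · intro j _ hj; simp [Pi.single_apply, hj]
        · intro hmem; exact absurd (Finset.mem_univ i) hmem
      rw [ms, this, hwi, χ2_one]
    have key : ∑ v : ι → ZMod 2, ms (v + J0) w = ∑ v : ι → ZMod 2, ms v w :=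
      Fintype.sum_equiv (Equiv.addRight J0) _ _ (fun v => rfl)
    have key2 : ∀ v : ι → ZMod 2, ms (v + J0) w = - ms v w := by
      intro v; rw [ms_add_left, hd]; ring
    have h2 : ∑ v : ι → ZMod 2, ms (v + J0) w = ∑ v : ι → ZMod 2, - ms v w :=
      Finset.sum_congr rfl (fun v _ => key2 v)
    rw [Finset.sum_neg_distrib] at h2
    linarith [key, h2]

lemma sum_ms_subgroup {ι : Type*} [Fintype ι] (S : AddSubgroup (ι → ZMod 2)) [Fintype ↥S]
    (y J0 : ι → ZMod 2) (hJ0 : J0 ∈ S) (hd : ms J0 y = -1) :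
    ∑ J : ↥S, ms (J : ι → ZMod 2) y = 0 := by
  have key : ∑ J : ↥S, ms ((J + ⟨J0, hJ0⟩ : ↥S) : ι → ZMod 2) y = ∑ J : ↥S, ms (J : ι → ZMod 2) y :=
    Fintype.sum_equiv (Equiv.addRight (⟨J0, hJ0⟩ : ↥S)) _ _ (fun v => rfl)
  have key2 : ∀ J : ↥S, ms ((J + ⟨J0, hJ0⟩ : ↥S) : ι → ZMod 2) y = - ms (J : ι → ZMod 2) y := by
    intro J
    have : ((J + ⟨J0, hJ0⟩ : ↥S) : ι → ZMod 2) = (J : ι → ZMod 2) + J0 := rfl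
    rw [this, ms_add_left, hd]; ring
  have h2 : ∑ J : ↥S, ms ((J + ⟨J0, hJ0⟩ : ↥S) : ι → ZMod 2) y = ∑ J : ↥S, - ms (J : ι → ZMod 2) y :=
    Finset.sum_congr rfl (fun v _ => key2 v)
  rw [Finset.sum_neg_distrib] at h2
  linarith [key, h2]
end NoLoc

open NoLoc

/-- For every m ≥ 1 there is a constant G (depending only on m) such that for every
n ≥ 1, every subgroup S of V with |S| > G, and every permutation π of V, some J ∈ S
has a nonzero Fourier coefficient a^J_I at some I of Hamming weight > m. -/
theorem no_localization_of_large_subgroup :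
    ∀ m : ℕ, 1 ≤ m → ∃ G : ℕ,
      ∀ n : ℕ, 1 ≤ n →
        ∀ S : AddSubgroup (Fin n → ZMod 2), G < Nat.card S →
          ∀ π : Equiv.Perm (Fin n → ZMod 2),
            ∃ J ∈ S, ∃ I : Fin n → ZMod 2, m < wt I ∧ fc π J I ≠ 0 := by
  intro m hm
  refine ⟨2 ^ m, ?_⟩
  intro n hn S hS π
  by_contra hcon
  push_neg at hcon
  classical
  haveI : Fintype ↥S := Fintype.ofFinite _
  have hcardV : (Fintype.card (Fin n → ZMod 2) : ℝ) = 2 ^ n := by simp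
  have h2n : (2 ^ n : ℝ) ≠ 0 := by positivity
  set F : (Fin n → ZMod 2) → ℝ := fun x => ∑ J : ↥S, sgn (π x) (J : Fin n → ZMod 2) with hF
  set c : (Fin n → ZMod 2) → ℝ := fun I => (2 ^ n : ℝ)⁻¹ * ∑ x, F x * sgn I x with hc
  -- (A) F takes values 0 or card S
  have hF01 : ∀ x, F x = 0 ∨ F x = (Nat.card ↥S : ℝ) := by
    intro x
    by_cases hall : ∀ J ∈ S, ms J (π x) = 1
    · right
      simp only [hF]
      have : ∀ J : ↥S, sgn (π x) (J : Fin n → ZMod 2) = 1 := by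
        intro J
        rw [sgn_eq_ms, ms_comm]
        exact hall J J.2
      simp [this, Nat.card_eq_fintype_card, Finset.card_univ]
    · left
      push_neg at hall
      obtain ⟨J0, hJ0S, hJ0⟩ := hall
      have hd : ms J0 (π x) = -1 := (ms_values J0 (π x)).resolve_left hJ0
      simp only [hF]
      have : ∀ J : ↥S, sgn (π x) (J : Fin n → ZMod 2) = ms (J : Fin n → ZMod 2) (π x) := by
        intro J; rw [sgn_eq_ms, ms_comm]
      rw [Finset.sum_congr rfl (fun J _ => this J)]
      exact sum_ms_subgroup S (π x) J0 hJ0S hd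
  -- (B) total sum of F
  have hsumF : ∑ x, F x = (2 ^ n : ℝ) := by
    simp only [hF]
    rw [Finset.sum_comm]
    have hinner : ∀ J : ↥S, (∑ x, sgn (π x) (J : Fin n → ZMod 2)) =
        (if (J : Fin n → ZMod 2) = 0 then (2 ^ n : ℝ) else 0) := by
      intro J
      have := Equiv.sum_comp π (fun y => sgn y (J : Fin n → ZMod 2))
      rw [this]
      have : ∀ y, sgn y (J : Fin n → ZMod 2) = ms y (J : Fin n → ZMod 2) := fun y => rfl
      rw [Finset.sum_congr rfl (fun y _ => this y), sum_ms_left]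
      rw [hcardV]
    rw [Finset.sum_congr rfl (fun J _ => hinner J)]
    rw [Fintype.sum_eq_single (0 : ↥S)]
    · simp
    · intro J hJ
      rw [if_neg]
      intro hJ0
      exact hJ (Subtype.ext hJ0)
  -- (C) c in terms of fc
  have hcI : ∀ I, c I = ∑ J : ↥S, fc π (J : Fin n → ZMod 2) I := by
    intro I
    simp only [hc, hF, fc, Finset.sum_mul]
    rw [Finset.sum_comm, Finset.mul_sum]
    refine Finset.sum_congr rfl (fun J _ => ?_)
    rw [Finset.mul_sum, Finset.mul_sum]
    refine Finset.sum_congr rfl (fun x _ => ?_)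
    rw [one_div]
    ring
  -- (D) vanishing above weight m
  have hvanish : ∀ I, m < wt I → c I = 0 := by
    intro I hI
    rw [hcI I]
    exact Finset.sum_eq_zero (fun J _ => hcon (J : Fin n → ZMod 2) J.2 I hI)
  -- (E) inversion
  have horth : ∀ x x' : Fin n → ZMod 2, (∑ I, sgn I x' * sgn I x) =
      if x' = x then (2 ^ n : ℝ) else 0 := by
    intro x x'
    have h1 : ∀ I : Fin n → ZMod 2, sgn I x' * sgn I x = ms I (x' + x) := by
      intro I; rw [sgn_eq_ms, sgn_eq_ms, ← ms_add_right]
    rw [Finset.sum_congr rfl (fun I _ => h1 I)]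
    have h2 : ∀ I : Fin n → ZMod 2, ms I (x' + x) = ms (x' + x) I := fun I => ms_comm _ _
    rw [Finset.sum_congr rfl (fun I _ => h2 I)]
    have h3 : ∀ v : Fin n → ZMod 2, ms (x' + x) v = ms v ((fun w => x' + x) v) := by
      intro v; rw [ms_comm]
    rw [Finset.sum_congr rfl (fun v _ => h3 v), sum_ms_left, hcardV]
    congr 1
    have : ∀ a b : ZMod 2, a + b = 0 ↔ a = b := by decide
    simp only [eq_iff_iff]
    constructor
    · intro h; funext i; exact (this _ _).1 (congrFun h i)
    · intro h; subst h; funext i; exact (this (x' i) (x' i)).2 rfl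
  have hinv : ∀ x, F x = ∑ I, c I * sgn I x := by
    intro x
    simp only [hc, Finset.sum_mul]
    have step : ∀ I : Fin n → ZMod 2,
        ((2 ^ n : ℝ)⁻¹ * ∑ x', F x' * sgn I x') * sgn I x
        = (2 ^ n : ℝ)⁻¹ * ∑ x', F x' * (sgn I x' * sgn I x) := by
      intro I
      rw [mul_assoc, Finset.sum_mul]
      congr 1
      exact Finset.sum_congr rfl (fun x' _ => by ring)
    rw [Finset.sum_congr rfl (fun I _ => step I), ← Finset.mul_sum, Finset.sum_comm]
    have step2 : ∀ x' : Fin n → ZMod 2,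
        (∑ I, F x' * (sgn I x' * sgn I x)) = F x' * (if x' = x then (2 ^ n : ℝ) else 0) := by
      intro x'
      rw [← Finset.mul_sum, horth x x']
    rw [Finset.sum_congr rfl (fun x' _ => step2 x')]
    have hlast : (∑ x', F x' * if x' = x then (2 ^ n : ℝ) else 0) = F x * 2 ^ n := by
      rw [Finset.sum_congr rfl (fun x' (_ : x' ∈ Finset.univ) => mul_ite (x' = x) (F x') (2 ^ n : ℝ) 0)]
      simp only [mul_zero]
      rw [Finset.sum_ite_eq' Finset.univ x (fun x' => F x' * (2 ^ n : ℝ))]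
      simp
    rw [hlast]
    field_simp
  -- c 0 = 1
  have hc0 : c 0 = 1 := by
    have hs0 : ∀ x : Fin n → ZMod 2, sgn (0 : Fin n → ZMod 2) x = 1 := by
      intro x
      rw [sgn_eq_ms, ms_zero_left]
    simp only [hc]
    rw [Finset.sum_congr rfl (fun x _ => by rw [hs0 x, mul_one]), hsumF]
    field_simp
  -- maximal weight nonvanishing coefficient
  obtain ⟨Istar, hIstarD, hIstarMax⟩ :
      ∃ I, c I ≠ 0 ∧ ∀ I', c I' ≠ 0 → wt I' ≤ wt I := by
    have hne : (Finset.univ.filter (fun I : Fin n → ZMod 2 => c I ≠ 0)).Nonempty :=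
      ⟨0, by simp [hc0]⟩
    obtain ⟨I, hI, hmax⟩ := Finset.exists_max_image _ wt hne
    refine ⟨I, ?_, ?_⟩
    · simpa using hI
    · intro I' hI'
      exact hmax I' (by simpa using hI')
  have hwtIstar : wt Istar ≤ m := by
    by_contra hw
    exact hIstarD (hvanish Istar (by omega))
  have hmaxsupp : ∀ I, c I ≠ 0 → (∀ i, Istar i = 1 → I i = 1) → I = Istar := by
    intro I hI hsup
    have h1 : Finset.univ.filter (fun i => Istar i = 1) ⊆ Finset.univ.filter (fun i => I i = 1) := by
      intro i hi
      simp only [Finset.mem_filter, Finset.mem_univ, true_and] at hi ⊢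
      exact hsup i hi
    have h2 : wt I ≤ wt Istar := hIstarMax I hI
    have h3 : Finset.univ.filter (fun i => Istar i = 1) = Finset.univ.filter (fun i => I i = 1) :=
      Finset.eq_of_subset_of_card_le h1 h2
    funext i
    rcases zmod2_cases (I i) with hIi | hIi <;> rcases zmod2_cases (Istar i) with hSi | hSi
    · rw [hIi, hSi]
    · exfalso
      have : i ∈ Finset.univ.filter (fun i => Istar i = 1) := by simp [hSi]
      rw [h3] at this
      simp only [Finset.mem_filter] at this
      rw [hIi] at this
      exact absurd this.2 (by decide)
    · exfalso
      have : i ∈ Finset.univ.filter (fun i => I i = 1) := by simp [hIi]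
      rw [← h3] at this
      simp only [Finset.mem_filter] at this
      rw [hSi] at this
      exact absurd this.2 (by decide)
    · rw [hIi, hSi]
  -- the support finset T of Istar
  set T : Finset (Fin n) := Finset.univ.filter (fun i => Istar i = 1) with hT
  have hTcard : T.card = wt Istar := rfl
  set p : Fin n → Prop := fun i => i ∈ T with hp
  haveI : DecidablePred p := fun i => by rw [hp]; infer_instance
  set e := Equiv.piEquivPiSubtypeProd p (fun _ => ZMod 2) with he
  -- splitting ms over the partition T / Tᶜ
  have hms_split : ∀ (K : Fin n → ZMod 2) (y : ∀ i : { i // p i }, ZMod 2)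
      (z : ∀ i : { i // ¬ p i }, ZMod 2),
      ms K (e.symm (y, z)) =
        ms (fun i : { i // p i } => K i) y * ms (fun i : { i // ¬ p i } => K i) z := by
    intro K y z
    rw [ms, ms, ms, ← χ2_add]
    congr 1
    rw [← Finset.sum_filter_add_sum_filter_not Finset.univ p
      (fun i => K i * (e.symm (y, z)) i)]
    congr 1
    · have hsub : (∑ i ∈ Finset.univ.filter p, K i * (e.symm (y, z)) i)
          = ∑ i : { i // p i }, K i * (e.symm (y, z)) i :=
        Finset.sum_subtype (Finset.univ.filter p) (fun i => by simp; exact Iff.rfl)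
          (fun i => K i * (e.symm (y, z)) i)
      rw [hsub]
      refine Finset.sum_congr rfl (fun i _ => ?_)
      congr 1
      simp only [he, Equiv.piEquivPiSubtypeProd_symm_apply]
      rw [dif_pos i.2]
    · have hsub : (∑ i ∈ Finset.univ.filter (fun i => ¬ p i), K i * (e.symm (y, z)) i)
          = ∑ i : { i // ¬ p i }, K i * (e.symm (y, z)) i :=
        Finset.sum_subtype (Finset.univ.filter (fun i => ¬ p i)) (fun i => by simp)
          (fun i => K i * (e.symm (y, z)) i)
      rw [hsub]
      refine Finset.sum_congr rfl (fun i _ => ?_)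
      congr 1
      simp only [he, Equiv.piEquivPiSubtypeProd_symm_apply]
      rw [dif_neg i.2]
  have hzmodadd : ∀ a b : ZMod 2, a + b = 0 → a = b := by decide
  -- fiber lemma : every fiber over Tᶜ contains a point of the support of F
  have hfiber : ∀ z : { i // ¬ p i } → ZMod 2, ∃ y, F (e.symm (y, z)) ≠ 0 := by
    intro z
    by_contra hz
    push_neg at hz
    have hsum0 : ∑ y : { i // p i } → ZMod 2,
        F (e.symm (y, z)) * sgn Istar (e.symm (y, z)) = 0 :=
      Finset.sum_eq_zero (fun y _ => by rw [hz y, zero_mul])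
    have step1 : ∀ y : { i // p i } → ZMod 2,
        F (e.symm (y, z)) * sgn Istar (e.symm (y, z))
          = ∑ I, c I * ms (I + Istar) (e.symm (y, z)) := by
      intro y
      rw [hinv (e.symm (y, z)), Finset.sum_mul]
      refine Finset.sum_congr rfl (fun I _ => ?_)
      rw [ms_add_left, sgn_eq_ms, sgn_eq_ms]
      ring
    have hsum2 : ∑ y : { i // p i } → ZMod 2,
        F (e.symm (y, z)) * sgn Istar (e.symm (y, z))
          = c Istar * (Fintype.card ({ i // p i } → ZMod 2) : ℝ) := by
      rw [Finset.sum_congr rfl (fun y _ => step1 y), Finset.sum_comm]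
      have inner : ∀ I : Fin n → ZMod 2,
          (∑ y : { i // p i } → ZMod 2, c I * ms (I + Istar) (e.symm (y, z)))
            = c I * ((if (fun i : { i // p i } => (I + Istar) (i : Fin n)) = 0
                then (Fintype.card ({ i // p i } → ZMod 2) : ℝ) else 0)
              * ms (fun i : { i // ¬ p i } => (I + Istar) (i : Fin n)) z) := by
        intro I
        rw [← Finset.mul_sum]
        congr 1
        have : ∀ y : { i // p i } → ZMod 2, ms (I + Istar) (e.symm (y, z))
            = ms y (fun i : { i // p i } => (I + Istar) (i : Fin n))
              * ms (fun i : { i // ¬ p i } => (I + Istar) (i : Fin n)) z := by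
          intro y
          rw [hms_split (I + Istar) y z]
          congr 1
          exact ms_comm _ _
        rw [Finset.sum_congr rfl (fun y _ => this y), ← Finset.sum_mul, sum_ms_left]
      rw [Finset.sum_congr rfl (fun I _ => inner I)]
      rw [Fintype.sum_eq_single Istar]
      · have hzero : Istar + Istar = 0 := by
          funext i
          have : ∀ a : ZMod 2, a + a = 0 := by decide
          exact this (Istar i)
        rw [hzero]
        have h1 : (fun i : { i // p i } => (0 : Fin n → ZMod 2) (i : Fin n)) =
            (0 : { i // p i } → ZMod 2) := rfl
        have h2 : (fun i : { i // ¬ p i } => (0 : Fin n → ZMod 2) (i : Fin n)) =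
            (0 : { i // ¬ p i } → ZMod 2) := rfl
        rw [h1, h2, if_pos rfl, ms_zero_left, mul_one]
      · intro I hI
        by_cases hcIz : c I = 0
        · rw [hcIz, zero_mul]
        · rw [if_neg, zero_mul, mul_zero]
          intro hKp
          apply hI
          apply hmaxsupp I hcIz
          intro i hi
          have hpi : p i := by
            rw [hp, hT]
            simp [hi]
          have := congrFun hKp ⟨i, hpi⟩
          simp only [Pi.zero_apply, Pi.add_apply] at this
          have heq : I i = Istar i := hzmodadd _ _ this
          rw [heq, hi]
    rw [hsum0] at hsum2
    have hcardpos : (0 : ℝ) < (Fintype.card ({ i // p i } → ZMod 2) : ℝ) := by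
      exact_mod_cast Fintype.card_pos
    rcases mul_eq_zero.mp hsum2.symm with h | h
    · exact hIstarD h
    · linarith
  -- counting : the support of F has at least 2 ^ (n - T.card) elements
  choose yf hyf using hfiber
  set A : Finset (Fin n → ZMod 2) := Finset.univ.filter (fun x => F x ≠ 0) with hA
  have hAcard : 2 ^ (n - T.card) ≤ A.card := by
    have hmap : ∀ z ∈ Finset.univ, (fun z : { i // ¬ p i } → ZMod 2 => e.symm (yf z, z)) z ∈ A := by
      intro z _
      simp only [hA, Finset.mem_filter, Finset.mem_univ, true_and]
      exact hyf z
    have hinj : Set.InjOn (fun z : { i // ¬ p i } → ZMod 2 => e.symm (yf z, z))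
        ↑(Finset.univ : Finset ({ i // ¬ p i } → ZMod 2)) := by
      intro z1 _ z2 _ h
      have := congrArg e h
      simp only [Equiv.apply_symm_apply] at this
      exact (Prod.mk.injEq _ _ _ _).mp this |>.2
    have hle := Finset.card_le_card_of_injOn _ hmap hinj
    rw [Finset.card_univ] at hle
    have hcard1 : Fintype.card ({ i // ¬ p i } → ZMod 2) = 2 ^ (n - T.card) := by
      have hcard2 : Fintype.card { x // p x } = T.card := by
        rw [Fintype.card_congr (Equiv.subtypeEquivRight (fun i => by rw [hp] : ∀ i, p i ↔ i ∈ T))]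
        exact Fintype.card_coe T
      rw [Fintype.card_fun, ZMod.card, Fintype.card_subtype_compl, Fintype.card_fin, hcard2]
    rw [hcard1] at hle
    exact hle
  -- the support of F has exactly 2 ^ n / |S| elements
  have hAS : A.card * Nat.card ↥S = 2 ^ n := by
    have h1 : ∑ x ∈ A, F x = ∑ x, F x := by
      rw [hA]
      exact Finset.sum_filter_ne_zero Finset.univ
    have h2 : ∑ x ∈ A, F x = (A.card : ℝ) * (Nat.card ↥S : ℝ) := by
      rw [Finset.sum_congr rfl (fun x hx => ?_), Finset.sum_const, nsmul_eq_mul]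
      have hx' : F x ≠ 0 := by
        rw [hA] at hx
        exact (Finset.mem_filter.mp hx).2
      exact (hF01 x).resolve_left hx'
    have h3 : (A.card : ℝ) * (Nat.card ↥S : ℝ) = 2 ^ n := by rw [← h2, h1, hsumF]
    exact_mod_cast h3
  -- final contradiction
  have hTn : T.card ≤ n := by
    have := Finset.card_le_univ T
    simpa using this
  have h2T : 2 ^ T.card ≤ 2 ^ m := Nat.pow_le_pow_right (by norm_num) (hTcard ▸ hwtIstar)
  have hApos : 0 < 2 ^ (n - T.card) := by positivity
  have hfin : 2 ^ n < 2 ^ n := by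
    calc 2 ^ n = 2 ^ (n - T.card) * 2 ^ T.card := by
          rw [← pow_add, Nat.sub_add_cancel hTn]
      _ < 2 ^ (n - T.card) * Nat.card ↥S :=
          (mul_lt_mul_iff_right₀ hApos).mpr (lt_of_le_of_lt h2T hS)
      _ ≤ A.card * Nat.card ↥S := Nat.mul_le_mul_right _ hAcard
      _ = 2 ^ n := hAS
  exact absurd hfin (lt_irrefl _)
end

section
/- For every integer m ≥ 1 and every real C > 0, there exist an integer n ≥ 1 and a subset S of V with |S| ≤ C·n such that for every permutation π of V there exist J ∈ S and I ∈ V with Hamming weight |I| > m and a^J_I ≠ 0. Consequently the 'Quasiparticle Locality Conjecture' (that sets of size O(n) always admit a permutation localizing all their Fourier coefficients to weight ≤ m) is false. -/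
open Finset

namespace QPF
noncomputable def e2 : ZMod 2 → ℝ := fun a => if a = 1 then -1 else 1
lemma zmod2_cases (a : ZMod 2) : a = 0 ∨ a = 1 := by revert a; decide
@[simp] lemma e2_zero : e2 0 = 1 := by simp [e2]
@[simp] lemma e2_one : e2 1 = -1 := by simp [e2]
lemma e2_add (a b : ZMod 2) : e2 (a + b) = e2 a * e2 b := by
  rcases zmod2_cases a with ha | ha <;> rcases zmod2_cases b with hb | hb <;>
    subst ha <;> subst hb <;>
    simp [e2, show (1 + 1 : ZMod 2) = 0 by decide]
lemma e2_sum {α : Type*} (s : Finset α) (g : α → ZMod 2) :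
    e2 (∑ i ∈ s, g i) = ∏ i ∈ s, e2 (g i) := by
  classical
  induction s using Finset.cons_induction with
  | empty => simp
  | cons a s ha ih => rw [Finset.sum_cons, Finset.prod_cons, e2_add, ih]
lemma sgn_def {n : ℕ} (u v : Fin n → ZMod 2) : sgn u v = e2 (∑ i, u i * v i) := rfl
lemma zmod2_add_eq_zero (a b : ZMod 2) : a + b = 0 ↔ a = b := by revert a b; decide
lemma sum_e2_mul {N : ℕ} (z : Fin N → ZMod 2) :
    ∑ v : Fin N → ZMod 2, e2 (∑ i, v i * z i) = if z = 0 then (2 : ℝ) ^ N else 0 := by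
  classical
  by_cases hz : z = 0
  · subst hz
    rw [if_pos rfl]
    simp only [Pi.zero_apply, mul_zero, Finset.sum_const_zero, e2_zero, Finset.sum_const,
      Finset.card_univ, nsmul_eq_mul, mul_one]
    rw [Fintype.card_fun]
    simp [ZMod.card]
  · rw [if_neg hz]
    obtain ⟨i0, hi0⟩ : ∃ i, z i = 1 := by
      by_contra h; push_neg at h
      exact hz (funext fun i => (zmod2_cases (z i)).resolve_right (h i))
    set d : Fin N → ZMod 2 := fun i => if i = i0 then 1 else 0 with hd
    have hkey : ∀ v : Fin N → ZMod 2,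
        e2 (∑ i, (v + d) i * z i) = - e2 (∑ i, v i * z i) := by
      intro v
      have hsum : ∑ i, (v + d) i * z i = (∑ i, v i * z i) + 1 := by
        simp only [Pi.add_apply, add_mul]
        rw [Finset.sum_add_distrib]
        congr 1
        rw [Finset.sum_eq_single i0]
        · simp [hd, hi0]
        · intro j _ hj; simp [hd, hj]
        · intro h; exact absurd (Finset.mem_univ i0) h
      rw [hsum, e2_add, e2_one]
      ring
    have hinv : ∑ v : Fin N → ZMod 2, e2 (∑ i, (v + d) i * z i)
        = ∑ v : Fin N → ZMod 2, e2 (∑ i, v i * z i) :=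
      Fintype.sum_equiv (Equiv.addRight d) _ _ (fun v => rfl)
    have : ∑ v : Fin N → ZMod 2, e2 (∑ i, v i * z i)
        = - ∑ v : Fin N → ZMod 2, e2 (∑ i, v i * z i) := by
      conv_lhs => rw [← hinv]
      rw [← Finset.sum_neg_distrib]
      exact Finset.sum_congr rfl fun v _ => hkey v
    linarith

-- chunk 2
lemma sum_sgn_mul_sgn {N : ℕ} (x y : Fin N → ZMod 2) :
    ∑ I : Fin N → ZMod 2, sgn I x * sgn I y = if x = y then (2 : ℝ) ^ N else 0 := by
  classical
  have h1 : ∀ I : Fin N → ZMod 2, sgn I x * sgn I y = e2 (∑ i, I i * (x + y) i) := by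
    intro I
    rw [sgn_def, sgn_def, ← e2_add]
    congr 1
    rw [← Finset.sum_add_distrib]
    exact Finset.sum_congr rfl fun i _ => by rw [Pi.add_apply, mul_add]
  simp_rw [h1]
  rw [sum_e2_mul]
  have hiff : (x + y = 0) ↔ (x = y) := by
    constructor
    · intro h; funext i
      exact (zmod2_add_eq_zero (x i) (y i)).mp (congrFun h i)
    · intro h; subst h; funext i
      exact (zmod2_add_eq_zero (x i) (x i)).mpr rfl
  exact if_congr hiff rfl rfl

lemma inversion {N : ℕ} (π : Equiv.Perm (Fin N → ZMod 2)) (J y : Fin N → ZMod 2) :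
    ∑ I : Fin N → ZMod 2, fc π J I * sgn I y = sgn (π y) J := by
  classical
  have h2 : (2 : ℝ) ^ N ≠ 0 := by positivity
  simp only [fc, Finset.sum_mul, Finset.mul_sum]
  rw [Finset.sum_comm]
  have hx : ∀ x, ∑ I : Fin N → ZMod 2, 1 / 2 ^ N * (sgn I x * sgn (π x) J) * sgn I y
      = if x = y then sgn (π x) J else 0 := by
    intro x
    have : ∑ I : Fin N → ZMod 2, 1 / 2 ^ N * (sgn I x * sgn (π x) J) * sgn I y
        = 1 / 2 ^ N * sgn (π x) J * ∑ I : Fin N → ZMod 2, sgn I x * sgn I y := by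
      rw [Finset.mul_sum]
      exact Finset.sum_congr rfl fun I _ => by ring
    rw [this, sum_sgn_mul_sgn, mul_ite, mul_zero]
    by_cases h : x = y
    · rw [if_pos h, if_pos h]
      field_simp
    · rw [if_neg h, if_neg h]
  simp_rw [hx]
  rw [Finset.sum_ite_eq' Finset.univ y]
  simp

def indic {N : ℕ} (T : Finset (Fin N)) : Fin N → ZMod 2 := fun i => if i ∈ T then 1 else 0

lemma sgn_add_indic {N : ℕ} (I x : Fin N → ZMod 2) (T : Finset (Fin N)) :
    sgn I (x + indic T) = sgn I x * ∏ i ∈ T, e2 (I i) := by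
  classical
  rw [sgn_def, sgn_def]
  have hterm : ∀ i, I i * (x + indic T) i = I i * x i + (if i ∈ T then I i else 0) := by
    intro i
    simp only [Pi.add_apply, indic, mul_add]
    congr 1
    by_cases h : i ∈ T <;> simp [h]
  have hsum : ∑ i, I i * (x + indic T) i = (∑ i, I i * x i) + ∑ i ∈ T, I i := by
    simp_rw [hterm]
    rw [Finset.sum_add_distrib]
    congr 1
    rw [Finset.sum_ite_mem, Finset.univ_inter]
  rw [hsum, e2_add, e2_sum T]

lemma sum_powerset_neg_one_pow {N : ℕ} (D : Finset (Fin N)) (I : Fin N → ZMod 2) :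
    ∑ T ∈ D.powerset, (-1 : ℝ) ^ T.card * ∏ i ∈ T, e2 (I i)
      = ∏ i ∈ D, (1 - e2 (I i)) := by
  classical
  have h := Finset.prod_add (fun i => -e2 (I i)) (fun _ => (1 : ℝ)) D
  have h1 : ∏ i ∈ D, (1 - e2 (I i)) = ∏ i ∈ D, (-e2 (I i) + 1) :=
    Finset.prod_congr rfl fun i _ => by ring
  rw [h1, h]
  refine Finset.sum_congr rfl fun T _ => ?_
  rw [Finset.prod_const_one, mul_one]
  have : ∏ i ∈ T, (-e2 (I i)) = ∏ i ∈ T, ((-1) * e2 (I i)) :=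
    Finset.prod_congr rfl fun i _ => by ring
  rw [this, Finset.prod_mul_distrib, Finset.prod_const]

lemma deriv_vanish {N m : ℕ} (π : Equiv.Perm (Fin N → ZMod 2)) (J : Fin N → ZMod 2)
    (hm : ∀ I, m < wt I → fc π J I = 0)
    (D : Finset (Fin N)) (hD : D.card = m + 1) (x : Fin N → ZMod 2) :
    ∑ T ∈ D.powerset, (-1 : ℝ) ^ T.card * sgn (π (x + indic T)) J = 0 := by
  classical
  have hrw : ∀ T, sgn (π (x + indic T)) J
      = ∑ I : Fin N → ZMod 2, fc π J I * (sgn I x * ∏ i ∈ T, e2 (I i)) := by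
    intro T
    rw [← inversion π J (x + indic T)]
    exact Finset.sum_congr rfl fun I _ => by rw [sgn_add_indic]
  simp_rw [hrw, Finset.mul_sum]
  rw [Finset.sum_comm]
  apply Finset.sum_eq_zero
  intro I _
  by_cases hI : m < wt I
  · simp [hm I hI]
  · push_neg at hI
    have hex : ∃ i ∈ D, I i = 0 := by
      by_contra h; push_neg at h
      have hsub : D ⊆ Finset.univ.filter (fun i => I i = 1) := by
        intro i hi
        simp only [Finset.mem_filter, Finset.mem_univ, true_and]
        exact (zmod2_cases (I i)).resolve_left (h i hi)
      have hcard := Finset.card_le_card hsub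
      rw [hD] at hcard
      unfold wt at hI
      omega
    obtain ⟨i0, hi0D, hi0⟩ := hex
    have hzero : ∏ i ∈ D, (1 - e2 (I i)) = 0 :=
      Finset.prod_eq_zero hi0D (by rw [hi0, e2_zero]; ring)
    calc ∑ T ∈ D.powerset, (-1 : ℝ) ^ T.card * (fc π J I * (sgn I x * ∏ i ∈ T, e2 (I i)))
        = (fc π J I * sgn I x) * ∑ T ∈ D.powerset, (-1 : ℝ) ^ T.card * ∏ i ∈ T, e2 (I i) := by
          rw [Finset.mul_sum]
          exact Finset.sum_congr rfl fun T _ => by ring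
      _ = 0 := by rw [sum_powerset_neg_one_pow, hzero, mul_zero]

-- chunk 3 : splitting Fin (n+1)
lemma zmod2_sum_univ {M : Type*} [AddCommMonoid M] (h : ZMod 2 → M) :
    ∑ b : ZMod 2, h b = h 0 + h 1 := by
  rw [show (Finset.univ : Finset (ZMod 2)) = {0, 1} from by decide]
  rw [Finset.sum_insert (by decide), Finset.sum_singleton]

lemma sum_split {n : ℕ} {M : Type*} [AddCommMonoid M] (g : (Fin (n+1) → ZMod 2) → M) :
    ∑ x : Fin (n+1) → ZMod 2, g x
      = (∑ y : Fin n → ZMod 2, g (Fin.cons 0 y)) + ∑ y : Fin n → ZMod 2, g (Fin.cons 1 y) := by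
  rw [← Equiv.sum_comp (Fin.consEquiv fun _ : Fin (n+1) => ZMod 2) g, Fintype.sum_prod_type]
  rw [zmod2_sum_univ (fun b => ∑ y : Fin n → ZMod 2,
      g ((Fin.consEquiv fun _ : Fin (n+1) => ZMod 2) (b, y)))]
  rfl

lemma cons_add {n : ℕ} (b c : ZMod 2) (y z : Fin n → ZMod 2) :
    (Fin.cons b y : Fin (n+1) → ZMod 2) + Fin.cons c z = Fin.cons (b + c) (y + z) := by
  funext i
  refine Fin.cases ?_ ?_ i <;> simp

lemma indic_map_succ {n : ℕ} (T : Finset (Fin n)) :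
    indic (T.map (Fin.succEmb n)) = Fin.cons 0 (indic T) := by
  funext i
  refine Fin.cases ?_ ?_ i
  · simp [indic, Fin.succ_ne_zero]
  · intro j
    simp [indic, Fin.succ_ne_zero]

lemma indic_insert_zero {n : ℕ} (T : Finset (Fin n)) :
    indic (insert 0 (T.map (Fin.succEmb n))) = Fin.cons 1 (indic T) := by
  funext i
  refine Fin.cases ?_ ?_ i
  · simp [indic]
  · intro j
    simp [indic, Fin.succ_ne_zero]

lemma powerset_map' {α β : Type*} [DecidableEq α] [DecidableEq β] (f : α ↪ β) (s : Finset α) :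
    (s.map f).powerset = s.powerset.image (fun t => t.map f) := by
  ext t
  simp only [Finset.mem_powerset, Finset.mem_image]
  constructor
  · intro ht
    refine ⟨s.filter (fun a => f a ∈ t), Finset.filter_subset _ _, ?_⟩
    ext b
    simp only [Finset.mem_map, Finset.mem_filter]
    constructor
    · rintro ⟨a, ⟨_, hfa⟩, rfl⟩; exact hfa
    · intro hb
      obtain ⟨a, ha, rfl⟩ := Finset.mem_map.mp (ht hb)
      exact ⟨a, ⟨ha, hb⟩, rfl⟩
  · rintro ⟨u, hu, rfl⟩
    exact Finset.map_subset_map.mpr hu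

lemma sum_powerset_map {n : ℕ} {M : Type*} [AddCommMonoid M] (D : Finset (Fin n))
    (H : Finset (Fin (n+1)) → M) :
    ∑ T ∈ (D.map (Fin.succEmb n)).powerset, H T
      = ∑ T ∈ D.powerset, H (T.map (Fin.succEmb n)) := by
  rw [powerset_map', Finset.sum_image]
  intro t _ u _ h
  exact Finset.map_injective _ h

-- chunk 4: the granularity / Reed-Muller style lemma
set_option maxHeartbeats 2000000 in
lemma gran : ∀ (n : ℕ) (m : ℕ) (f : (Fin n → ZMod 2) → ZMod 2),
    (∀ (x : Fin n → ZMod 2) (D : Finset (Fin n)), D.card = m + 1 →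
      ∑ T ∈ D.powerset, f (x + indic T) = 0) →
    (∃ x, f x = 1) →
    2 ^ n ≤ 2 ^ m * ∑ x : Fin n → ZMod 2, (if f x = 1 then 1 else 0 : ℕ) := by
  intro n
  induction n with
  | zero =>
    intro m f _ hex
    obtain ⟨x0, hx0⟩ := hex
    have h1 : 1 ≤ ∑ x : Fin 0 → ZMod 2, (if f x = 1 then 1 else 0 : ℕ) := by
      have := Finset.single_le_sum (f := fun x : Fin 0 → ZMod 2 => (if f x = 1 then 1 else 0 : ℕ))
        (fun _ _ => Nat.zero_le _) (Finset.mem_univ x0)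
      simpa [hx0] using this
    calc (2:ℕ) ^ 0 = 1 := by norm_num
      _ ≤ 2 ^ m * ∑ x : Fin 0 → ZMod 2, (if f x = 1 then 1 else 0 : ℕ) :=
        Nat.one_le_iff_ne_zero.mpr (by positivity)
  | succ n ih =>
    intro m f hcond hex
    classical
    set f0 : (Fin n → ZMod 2) → ZMod 2 := fun y => f (Fin.cons 0 y) with hf0
    set f1 : (Fin n → ZMod 2) → ZMod 2 := fun y => f (Fin.cons 1 y) with hf1
    have hsplit : ∑ x : Fin (n+1) → ZMod 2, (if f x = 1 then 1 else 0 : ℕ)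
        = (∑ y : Fin n → ZMod 2, (if f0 y = 1 then 1 else 0 : ℕ))
          + ∑ y : Fin n → ZMod 2, (if f1 y = 1 then 1 else 0 : ℕ) :=
      sum_split _
    by_cases hq : ∀ y, f0 y = f1 y
    · -- the two halves agree
      have hcond0 : ∀ (y : Fin n → ZMod 2) (D' : Finset (Fin n)), D'.card = m + 1 →
          ∑ T ∈ D'.powerset, f0 (y + indic T) = 0 := by
        intro y D' hD'
        have h := hcond (Fin.cons 0 y) (D'.map (Fin.succEmb n))
          (by rw [Finset.card_map, hD'])
        rw [sum_powerset_map] at h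
        calc ∑ T ∈ D'.powerset, f0 (y + indic T)
            = ∑ T ∈ D'.powerset, f (Fin.cons 0 y + indic (T.map (Fin.succEmb n))) := by
              refine Finset.sum_congr rfl fun T _ => ?_
              rw [indic_map_succ, cons_add, add_zero]
          _ = 0 := h
      have hex0 : ∃ y, f0 y = 1 := by
        obtain ⟨x0, hx0⟩ := hex
        have hc : f (Fin.cons (x0 0) (Fin.tail x0)) = 1 := by
          rw [Fin.cons_self_tail]; exact hx0
        rcases zmod2_cases (x0 0) with h0 | h0
        · refine ⟨Fin.tail x0, ?_⟩
          rw [h0] at hc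
          exact hc
        · refine ⟨Fin.tail x0, ?_⟩
          rw [hq (Fin.tail x0)]
          rw [h0] at hc
          exact hc
      have hIH := ih m f0 hcond0 hex0
      have heqsum : ∑ y : Fin n → ZMod 2, (if f1 y = 1 then 1 else 0 : ℕ)
          = ∑ y : Fin n → ZMod 2, (if f0 y = 1 then 1 else 0 : ℕ) :=
        Finset.sum_congr rfl fun y _ => by rw [← hq y]
      rw [hsplit, heqsum]
      calc (2:ℕ) ^ (n+1) = 2 * 2 ^ n := by ring
        _ ≤ 2 * (2 ^ m * ∑ y : Fin n → ZMod 2, (if f0 y = 1 then 1 else 0 : ℕ)) :=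
          Nat.mul_le_mul_left 2 hIH
        _ = 2 ^ m * ((∑ y : Fin n → ZMod 2, (if f0 y = 1 then 1 else 0 : ℕ))
            + ∑ y : Fin n → ZMod 2, (if f0 y = 1 then 1 else 0 : ℕ)) := by ring
    · -- the two halves differ somewhere
      push_neg at hq
      obtain ⟨y0, hy0⟩ := hq
      set q : (Fin n → ZMod 2) → ZMod 2 := fun y => f0 y + f1 y with hqdef
      have hq1 : q y0 = 1 := by
        rcases zmod2_cases (f0 y0) with h0 | h0 <;> rcases zmod2_cases (f1 y0) with h1 | h1 <;>
          first
            | (exact absurd (h0.trans h1.symm) hy0)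
            | (simp [hqdef, h0, h1, show (1 + 1 : ZMod 2) = 0 by decide])
      rcases m with _ | k
      · -- m = 0 : impossible, first-order derivative in direction 0 forces f0 = f1
        exfalso
        have h := hcond (Fin.cons 0 y0) {0} (by simp)
        rw [show ({0} : Finset (Fin (n+1))) = insert 0 ((∅ : Finset (Fin n)).map (Fin.succEmb n))
            from by simp] at h
        rw [Finset.sum_powerset_insert (by simp)] at h
        simp only [Finset.map_empty, Finset.powerset_empty, Finset.sum_singleton] at h
        rw [show (insert (0 : Fin (n+1)) (∅ : Finset (Fin (n+1))))
            = insert 0 ((∅ : Finset (Fin n)).map (Fin.succEmb n)) from by rw [Finset.map_empty]] at h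
        rw [indic_insert_zero, cons_add] at h
        have hie1 : indic (∅ : Finset (Fin (n+1))) = 0 := by funext i; simp [indic]
        have hie2 : indic (∅ : Finset (Fin n)) = 0 := by funext i; simp [indic]
        rw [hie1, hie2, add_zero, add_zero, show (0 + 1 : ZMod 2) = 1 from by decide] at h
        exact hy0 ((zmod2_add_eq_zero _ _).mp h)
      · -- m = k + 1
        have hcondq : ∀ (y : Fin n → ZMod 2) (D' : Finset (Fin n)), D'.card = k + 1 →
            ∑ T ∈ D'.powerset, q (y + indic T) = 0 := by
          intro y D' hD'
          have h0mem : (0 : Fin (n+1)) ∉ D'.map (Fin.succEmb n) := by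
            intro hmem
            obtain ⟨j, -, hj⟩ := Finset.mem_map.mp hmem
            exact Fin.succ_ne_zero j hj
          have h := hcond (Fin.cons 0 y) (insert 0 (D'.map (Fin.succEmb n)))
            (by rw [Finset.card_insert_of_notMem h0mem, Finset.card_map, hD'])
          rw [Finset.sum_powerset_insert h0mem, sum_powerset_map, sum_powerset_map,
            ← Finset.sum_add_distrib] at h
          calc ∑ T ∈ D'.powerset, q (y + indic T)
              = ∑ T ∈ D'.powerset, (f (Fin.cons 0 y + indic (T.map (Fin.succEmb n)))
                + f (Fin.cons 0 y + indic (insert 0 (T.map (Fin.succEmb n))))) := by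
                refine Finset.sum_congr rfl fun T _ => ?_
                rw [indic_map_succ, indic_insert_zero, cons_add, cons_add, add_zero]
                simp only [show (0 + 1 : ZMod 2) = 1 from by decide,
                  show (0 + 0 : ZMod 2) = 0 from by decide]
                rfl
            _ = 0 := h
        have hIH := ih k q hcondq ⟨y0, hq1⟩
        have hcnt : ∑ y : Fin n → ZMod 2, (if q y = 1 then 1 else 0 : ℕ)
            ≤ (∑ y : Fin n → ZMod 2, (if f0 y = 1 then 1 else 0 : ℕ))
              + ∑ y : Fin n → ZMod 2, (if f1 y = 1 then 1 else 0 : ℕ) := by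
          rw [← Finset.sum_add_distrib]
          refine Finset.sum_le_sum fun y _ => ?_
          rcases zmod2_cases (f0 y) with h0 | h0 <;> rcases zmod2_cases (f1 y) with h1 | h1 <;>
            simp [hqdef, h0, h1, show (1 + 1 : ZMod 2) = 0 by decide,
              show (0 + 1 : ZMod 2) = 1 by decide, show (1 + 0 : ZMod 2) = 1 by decide,
              show (0 : ZMod 2) ≠ 1 by decide]
        rw [hsplit]
        calc (2:ℕ) ^ (n+1) = 2 * 2 ^ n := by ring
          _ ≤ 2 * (2 ^ k * ∑ y : Fin n → ZMod 2, (if q y = 1 then 1 else 0 : ℕ)) :=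
            Nat.mul_le_mul_left 2 hIH
          _ = 2 ^ (k+1) * ∑ y : Fin n → ZMod 2, (if q y = 1 then 1 else 0 : ℕ) := by ring
          _ ≤ 2 ^ (k+1) * ((∑ y : Fin n → ZMod 2, (if f0 y = 1 then 1 else 0 : ℕ))
              + ∑ y : Fin n → ZMod 2, (if f1 y = 1 then 1 else 0 : ℕ)) :=
            Nat.mul_le_mul_left _ hcnt

-- chunk 5 : the subspace embedding and its character sums
def emb (d N : ℕ) (w : Fin d → ZMod 2) : Fin N → ZMod 2 :=
  fun i => if h : (i : ℕ) < d then w ⟨i, h⟩ else 0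

lemma emb_castLE {d N : ℕ} (hdN : d ≤ N) (w : Fin d → ZMod 2) (k : Fin d) :
    emb d N w (Fin.castLE hdN k) = w k := by
  have h : ((Fin.castLE hdN k : Fin N) : ℕ) = (k : ℕ) := rfl
  unfold emb
  rw [dif_pos (h ▸ k.isLt)]
  exact congrArg w (Fin.ext h)

lemma emb_injective {d N : ℕ} (hdN : d ≤ N) : Function.Injective (emb d N) := by
  intro w w' h
  funext k
  have := congrFun h (Fin.castLE hdN k)
  rwa [emb_castLE hdN, emb_castLE hdN] at this

lemma emb_zero (d N : ℕ) : emb d N 0 = 0 := by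
  funext i
  unfold emb
  by_cases h : (i : ℕ) < d <;> simp [h]

lemma sum_mul_emb {d N : ℕ} (hdN : d ≤ N) (z : Fin N → ZMod 2) (w : Fin d → ZMod 2) :
    ∑ i, z i * emb d N w i = ∑ k : Fin d, z (Fin.castLE hdN k) * w k := by
  classical
  rw [← Finset.sum_filter_of_ne (s := Finset.univ) (p := fun i : Fin N => (i : ℕ) < d)
    (f := fun i => z i * emb d N w i) ?h]
  case h =>
    intro i _ hne
    by_contra hlt
    apply hne
    simp only [emb]
    rw [dif_neg hlt, mul_zero]
  refine Finset.sum_bij' (fun i hi => (⟨(i : ℕ), (Finset.mem_filter.mp hi).2⟩ : Fin d))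
    (fun k _ => Fin.castLE hdN k) ?_ ?_ ?_ ?_ ?_
  · intro a ha; exact Finset.mem_univ _
  · intro k _
    simp only [Finset.mem_filter, Finset.mem_univ, true_and]
    exact k.isLt
  · intro a ha; rfl
  · intro k _; rfl
  · intro i hi
    have hlt := (Finset.mem_filter.mp hi).2
    simp only [emb]
    rw [dif_pos hlt]
    rfl

lemma sum_sgn_emb {d N : ℕ} (hdN : d ≤ N) (z : Fin N → ZMod 2) :
    ∑ J ∈ Finset.univ.image (emb d N), sgn z J
      = if (∀ k : Fin d, z (Fin.castLE hdN k) = 0) then (2 : ℝ) ^ d else 0 := by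
  classical
  rw [Finset.sum_image (fun w _ w' _ h => emb_injective hdN h)]
  have hterm : ∀ w : Fin d → ZMod 2,
      sgn z (emb d N w) = e2 (∑ k : Fin d, w k * z (Fin.castLE hdN k)) := by
    intro w
    rw [sgn_def, sum_mul_emb hdN]
    congr 1
    exact Finset.sum_congr rfl fun k _ => mul_comm _ _
  simp_rw [hterm]
  rw [sum_e2_mul (fun k => z (Fin.castLE hdN k))]
  refine if_congr ?_ rfl rfl
  constructor
  · intro h k; exact congrFun h k
  · intro h; funext k; exact h k

lemma parity_transfer {α : Type*} (s : Finset α) (g : α → ℕ) (p : α → Prop) [DecidablePred p]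
    (h : ∑ a ∈ s, (-1 : ℝ) ^ g a * (if p a then (1:ℝ) else 0) = 0) :
    ∑ a ∈ s, (if p a then (1 : ZMod 2) else 0) = 0 := by
  classical
  have hz : ∑ a ∈ s, (-1 : ℤ) ^ g a * (if p a then (1:ℤ) else 0) = 0 := by
    have hcast : ((∑ a ∈ s, (-1 : ℤ) ^ g a * (if p a then (1:ℤ) else 0) : ℤ) : ℝ)
        = ∑ a ∈ s, (-1 : ℝ) ^ g a * (if p a then (1:ℝ) else 0) := by
      push_cast [apply_ite (fun t : ℤ => (t : ℝ))]
      rfl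
    exact_mod_cast hcast.trans h
  have := congrArg (fun t : ℤ => (t : ZMod 2)) hz
  simp only [Int.cast_sum, Int.cast_mul, Int.cast_pow, Int.cast_neg, Int.cast_one,
    Int.cast_zero, apply_ite (fun t : ℤ => (t : ZMod 2))] at this
  rw [show (-1 : ZMod 2) = 1 from by decide] at this
  simpa using this

end QPF


open QPF

/-- For every m ≥ 1 and every C > 0 there exist n ≥ 1 and a subset S of V with
|S| ≤ C·n such that no permutation of V localizes all Fourier coefficients of all
elements of S to Hamming weight ≤ m: the Quasiparticle Locality Conjecture is false. -/

theorem quasiparticle_locality_conjecture_false :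
    ∀ m : ℕ, 1 ≤ m → ∀ C : ℝ, 0 < C →
      ∃ n : ℕ, 1 ≤ n ∧ ∃ S : Finset (Fin n → ZMod 2),
        (S.card : ℝ) ≤ C * n ∧
        ∀ π : Equiv.Perm (Fin n → ZMod 2),
          ∃ J ∈ S, ∃ I : Fin n → ZMod 2, m < wt I ∧ fc π J I ≠ 0 := by
  intro m _hm C hC
  classical
  set d : ℕ := m + 1 with hd
  set n : ℕ := max d ⌈(2 ^ d : ℝ) / C⌉₊ with hn
  have hdn : d ≤ n := le_max_left _ _
  refine ⟨n, by omega, ?_⟩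
  refine ⟨Finset.univ.image (emb d n), ?_, ?_⟩
  · -- cardinality bound
    have hcard : (Finset.univ.image (emb d n)).card = 2 ^ d := by
      rw [Finset.card_image_of_injective _ (emb_injective hdn), Finset.card_univ,
        Fintype.card_fun]
      simp [ZMod.card]
    rw [hcard]
    have h1 : (2 : ℝ) ^ d / C ≤ (⌈(2 ^ d : ℝ) / C⌉₊ : ℝ) := Nat.le_ceil _
    have h2 : ((⌈(2 ^ d : ℝ) / C⌉₊ : ℕ) : ℝ) ≤ (n : ℝ) :=
      Nat.cast_le.mpr (le_max_right _ _)
    have h3 := (div_le_iff₀ hC).mp (h1.trans h2)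
    calc ((2 ^ d : ℕ) : ℝ) = (2 : ℝ) ^ d := by push_cast; ring
      _ ≤ n * C := h3
      _ = C * n := mul_comm _ _
  · intro π
    by_contra hcon
    push_neg at hcon
    set S := Finset.univ.image (emb d n) with hS
    set Pred : (Fin n → ZMod 2) → Prop :=
      fun x => ∀ k : Fin d, π x (Fin.castLE hdn k) = 0 with hPred
    have hS0 : ∀ x, ∑ J ∈ S, sgn (π x) J = if Pred x then (2 : ℝ) ^ d else 0 := fun x =>
      sum_sgn_emb hdn (π x)
    have hDvan : ∀ (D : Finset (Fin n)), D.card = m + 1 → ∀ x,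
        ∑ T ∈ D.powerset, (-1 : ℝ) ^ T.card * (if Pred (x + indic T) then (1:ℝ) else 0)
          = 0 := by
      intro D hD x
      have hJ : ∀ J ∈ S, ∑ T ∈ D.powerset, (-1:ℝ) ^ T.card * sgn (π (x + indic T)) J = 0 :=
        fun J hJS => deriv_vanish π J (fun I hI => hcon J hJS I hI) D hD x
      have hsum0 : ∑ T ∈ D.powerset, (-1:ℝ) ^ T.card * ∑ J ∈ S, sgn (π (x + indic T)) J
          = 0 := by
        simp_rw [Finset.mul_sum]
        rw [Finset.sum_comm]
        exact Finset.sum_eq_zero hJ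
      simp_rw [hS0] at hsum0
      have hfac : ∀ T : Finset (Fin n),
          (-1:ℝ) ^ T.card * (if Pred (x + indic T) then (2:ℝ)^d else 0)
          = (2:ℝ)^d * ((-1:ℝ) ^ T.card * (if Pred (x + indic T) then (1:ℝ) else 0)) := by
        intro T
        by_cases hp : Pred (x + indic T) <;> simp [hp] <;> ring
      simp_rw [hfac, ← Finset.mul_sum] at hsum0
      have h2d : (2:ℝ)^d ≠ 0 := by positivity
      exact (mul_eq_zero.mp hsum0).resolve_left h2d
    set fZ : (Fin n → ZMod 2) → ZMod 2 := fun x => if Pred x then 1 else 0 with hfZ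
    have hcondZ : ∀ (x : Fin n → ZMod 2) (D : Finset (Fin n)), D.card = m + 1 →
        ∑ T ∈ D.powerset, fZ (x + indic T) = 0 := by
      intro x D hD
      exact parity_transfer D.powerset Finset.card (fun T => Pred (x + indic T)) (hDvan D hD x)
    have hexZ : ∃ x, fZ x = 1 := by
      refine ⟨π.symm 0, ?_⟩
      have hp : Pred (π.symm 0) := by
        intro k
        simp
      simp only [hfZ]
      rw [if_pos hp]
    have hgran := gran n m fZ hcondZ hexZ
    set K : ℕ := ∑ x : Fin n → ZMod 2, (if Pred x then 1 else 0 : ℕ) with hK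
    have hgran' : 2 ^ n ≤ 2 ^ m * K := by
      refine le_trans hgran (le_of_eq ?_)
      congr 1
      refine Finset.sum_congr rfl fun x _ => ?_
      by_cases hp : Pred x
      · simp [hfZ, hp]
      · simp [hfZ, hp]
    have hcount : (2:ℝ) ^ d * (K : ℝ) = 2 ^ n := by
      have h1 : ∑ x : Fin n → ZMod 2, ∑ J ∈ S, sgn (π x) J = (2:ℝ) ^ n := by
        rw [Finset.sum_comm]
        have hinner : ∀ J : Fin n → ZMod 2, ∑ x : Fin n → ZMod 2, sgn (π x) J
            = if J = 0 then (2:ℝ) ^ n else 0 := by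
          intro J
          rw [Fintype.sum_equiv π (fun x => sgn (π x) J) (fun y => sgn y J) (fun x => rfl)]
          simp_rw [sgn_def]
          exact sum_e2_mul J
        simp_rw [hinner]
        rw [Finset.sum_ite_eq' S 0 (fun _ => (2:ℝ)^n)]
        rw [if_pos (Finset.mem_image.mpr ⟨0, Finset.mem_univ _, emb_zero d n⟩)]
      rw [← h1]
      simp_rw [hS0]
      have : ∀ x : Fin n → ZMod 2, (if Pred x then (2:ℝ)^d else 0)
          = (2:ℝ)^d * (if Pred x then (1:ℝ) else 0) := by
        intro x; by_cases hp : Pred x <;> simp [hp]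
      simp_rw [this, ← Finset.mul_sum]
      congr 1
      rw [hK]
      push_cast [apply_ite (fun t : ℕ => (t : ℝ))]
      rfl
    have hKn : 2 ^ d * K = 2 ^ n := by exact_mod_cast hcount
    have h2 : 2 * (2 ^ m * K) = 2 ^ n := by
      rw [← hKn, hd]; ring
    have hpos : 0 < 2 ^ n := Nat.pow_pos (by norm_num)
    omega
end

section
/- Fix a permutation π of V. For all J₁, J₂ ∈ V, the group algebra elements satisfy F̄_{J₁ + J₂} = F̄_{J₁} * F̄_{J₂} (product in AddMonoidAlgebra ℝ V, i.e., convolution over XOR), and moreover F̄_0 = 1 (the multiplicative identity of the group algebra). Thus J ↦ F̄_J is a monoid homomorphism from (V, XOR) into the multiplicative monoid of AddMonoidAlgebra ℝ V. -/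
open Finset

/-- The group algebra element F̄_J ∈ AddMonoidAlgebra ℝ V whose coefficient at g is a^J_g. -/
noncomputable def Fbar {n : ℕ} (π : Equiv.Perm (Fin n → ZMod 2))
    (J : Fin n → ZMod 2) : AddMonoidAlgebra ℝ (Fin n → ZMod 2) :=
  ∑ g : Fin n → ZMod 2, AddMonoidAlgebra.single g (fc π J g)

lemma zmod2cases (a : ZMod 2) : a = 0 ∨ a = 1 := by revert a; decide

lemma sgn_comm {n : ℕ} (u v : Fin n → ZMod 2) : sgn u v = sgn v u := by
  simp [sgn, mul_comm]

lemma sgn_zero_right {n : ℕ} (u : Fin n → ZMod 2) : sgn u 0 = 1 := by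
  simp [sgn]

lemma sgn_add_right {n : ℕ} (u v w : Fin n → ZMod 2) :
    sgn u (v + w) = sgn u v * sgn u w := by
  unfold sgn
  have h : ∑ i, u i * (v + w) i = (∑ i, u i * v i) + ∑ i, u i * w i := by
    simp [mul_add, Finset.sum_add_distrib]
  rw [h]
  rcases zmod2cases (∑ i, u i * v i) with h1 | h1 <;>
    rcases zmod2cases (∑ i, u i * w i) with h2 | h2 <;>
      simp [h1, h2]

lemma sgn_add_left {n : ℕ} (u v w : Fin n → ZMod 2) :
    sgn (u + v) w = sgn u w * sgn v w := by
  rw [sgn_comm, sgn_add_right, sgn_comm u w, sgn_comm v w]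

lemma vadd_self {n : ℕ} (x : Fin n → ZMod 2) : x + x = 0 := by
  funext i
  have : ∀ a : ZMod 2, a + a = 0 := by decide
  exact this (x i)

lemma vadd_eq_zero {n : ℕ} (x y : Fin n → ZMod 2) : x + y = 0 ↔ x = y := by
  constructor
  · intro h
    funext i
    have := congrFun h i
    have h2 : ∀ a b : ZMod 2, a + b = 0 → a = b := by decide
    exact h2 _ _ this
  · rintro rfl; exact vadd_self x

lemma sum_sgn {n : ℕ} (v : Fin n → ZMod 2) :
    ∑ u : Fin n → ZMod 2, sgn u v = if v = 0 then (2 ^ n : ℝ) else 0 := by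
  by_cases hv : v = 0
  · subst hv
    simp [sgn_comm, sgn_zero_right, Finset.card_univ]
  · simp only [hv, if_false]
    obtain ⟨i, hi⟩ : ∃ i, v i ≠ 0 := by
      by_contra h
      push_neg at h
      exact hv (funext h)
    have hvi : v i = 1 := (zmod2cases (v i)).resolve_left hi
    set d : Fin n → ZMod 2 := Pi.single i 1 with hd
    have hdv : sgn d v = -1 := by
      unfold sgn
      have : ∑ j, d j * v j = v i := by
        rw [Finset.sum_eq_single i]
        · simp [hd]
        · intro b _ hb; simp [hd, Pi.single_eq_of_ne hb]
        · intro h; exact absurd (Finset.mem_univ i) h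
      rw [this, hvi]
      simp
    have key : ∀ u, sgn (u + d) v = - sgn u v := fun u => by
      rw [sgn_add_left, hdv]; ring
    have h1 : ∑ u : Fin n → ZMod 2, sgn u v = ∑ u : Fin n → ZMod 2, sgn (u + d) v := by
      exact (Fintype.sum_equiv (Equiv.addRight d) _ _ (fun u => rfl)).symm
    have h2 : ∑ u : Fin n → ZMod 2, sgn (u + d) v = - ∑ u : Fin n → ZMod 2, sgn u v := by
      simp_rw [key]; rw [Finset.sum_neg_distrib]
    linarith [h1, h2]

lemma sum_sgn_mul {n : ℕ} (x y : Fin n → ZMod 2) :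
    ∑ g : Fin n → ZMod 2, sgn g x * sgn g y = if x = y then (2 ^ n : ℝ) else 0 := by
  have h : ∀ g : Fin n → ZMod 2, sgn g x * sgn g y = sgn g (x + y) := fun g =>
    (sgn_add_right g x y).symm
  simp_rw [h]
  have := sum_sgn (n := n) (x + y)
  rw [this]
  congr 1
  simp [vadd_eq_zero]

lemma key0 {n : ℕ} (π : Equiv.Perm (Fin n → ZMod 2)) (J₁ J₂ k : Fin n → ZMod 2) :
    ∑ g : Fin n → ZMod 2,
      (∑ x : Fin n → ZMod 2, sgn g x * sgn (π x) J₁) *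
      (∑ y : Fin n → ZMod 2, sgn (g + k) y * sgn (π y) J₂)
    = 2 ^ n * ∑ x : Fin n → ZMod 2, sgn k x * sgn (π x) (J₁ + J₂) := by
  have step1 : ∀ g : Fin n → ZMod 2,
      (∑ x : Fin n → ZMod 2, sgn g x * sgn (π x) J₁) *
      (∑ y : Fin n → ZMod 2, sgn (g + k) y * sgn (π y) J₂)
      = ∑ x : Fin n → ZMod 2, ∑ y : Fin n → ZMod 2,
          (sgn g x * sgn (π x) J₁) * (sgn (g + k) y * sgn (π y) J₂) := by
    intro g
    rw [Finset.sum_mul_sum]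
  simp_rw [step1]
  rw [Finset.sum_comm]
  have step2 : ∀ x : Fin n → ZMod 2,
      (∑ g : Fin n → ZMod 2, ∑ y : Fin n → ZMod 2,
        (sgn g x * sgn (π x) J₁) * (sgn (g + k) y * sgn (π y) J₂))
      = ∑ y : Fin n → ZMod 2, (sgn (π x) J₁ * sgn (π y) J₂ * sgn k y) *
          ∑ g : Fin n → ZMod 2, sgn g x * sgn g y := by
    intro x
    rw [Finset.sum_comm]
    refine Finset.sum_congr rfl fun y _ => ?_
    rw [Finset.mul_sum]
    refine Finset.sum_congr rfl fun g _ => ?_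
    rw [sgn_add_left]
    ring
  simp_rw [step2, sum_sgn_mul]
  have step3 : ∀ x : Fin n → ZMod 2,
      (∑ y : Fin n → ZMod 2, (sgn (π x) J₁ * sgn (π y) J₂ * sgn k y) *
        (if x = y then (2 ^ n : ℝ) else 0))
      = 2 ^ n * (sgn k x * sgn (π x) (J₁ + J₂)) := by
    intro x
    rw [Finset.sum_eq_single x]
    · rw [if_pos rfl, sgn_add_right]
      ring
    · intro y _ hy
      rw [if_neg (fun h => hy h.symm), mul_zero]
    · intro h; exact absurd (Finset.mem_univ x) h
  simp_rw [step3]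
  rw [← Finset.mul_sum]

lemma fc_key {n : ℕ} (π : Equiv.Perm (Fin n → ZMod 2)) (J₁ J₂ k : Fin n → ZMod 2) :
    ∑ g : Fin n → ZMod 2, fc π J₁ g * fc π J₂ (g + k) = fc π (J₁ + J₂) k := by
  unfold fc
  have h2 : (2 : ℝ) ^ n ≠ 0 := by positivity
  have h : ∑ g : Fin n → ZMod 2,
      (1 / 2 ^ n * ∑ x : Fin n → ZMod 2, sgn g x * sgn (π x) J₁) *
      (1 / 2 ^ n * ∑ x : Fin n → ZMod 2, sgn (g + k) x * sgn (π x) J₂)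
      = (1 / 2 ^ n) * (1 / 2 ^ n) * ∑ g : Fin n → ZMod 2,
          (∑ x : Fin n → ZMod 2, sgn g x * sgn (π x) J₁) *
          (∑ y : Fin n → ZMod 2, sgn (g + k) y * sgn (π y) J₂) := by
    rw [Finset.mul_sum]
    refine Finset.sum_congr rfl fun g _ => ?_
    ring
  rw [h, key0]
  field_simp

lemma fc_zero {n : ℕ} (π : Equiv.Perm (Fin n → ZMod 2)) (g : Fin n → ZMod 2) :
    fc π 0 g = if g = 0 then 1 else 0 := by
  unfold fc
  have h : ∀ x : Fin n → ZMod 2, sgn g x * sgn (π x) 0 = sgn x g := fun x => by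
    rw [sgn_zero_right, mul_one, sgn_comm]
  simp_rw [h, sum_sgn g]
  have h2 : (2 : ℝ) ^ n ≠ 0 := by positivity
  by_cases hg : g = 0 <;> simp [hg, h2]

/-- J ↦ F̄_J is a monoid homomorphism: it sends XOR addition to
convolution products in the group algebra and 0 to 1. -/
theorem Fbar_hom {n : ℕ} (hn : 1 ≤ n) (π : Equiv.Perm (Fin n → ZMod 2)) :
    (∀ J₁ J₂ : Fin n → ZMod 2, Fbar π (J₁ + J₂) = Fbar π J₁ * Fbar π J₂) ∧
    Fbar π (0 : Fin n → ZMod 2) = 1 := by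
  constructor
  · intro J₁ J₂
    unfold Fbar
    rw [Finset.sum_mul_sum]
    have h1 : ∀ g h : Fin n → ZMod 2,
        AddMonoidAlgebra.single g (fc π J₁ g) * AddMonoidAlgebra.single h (fc π J₂ h)
        = AddMonoidAlgebra.single (g + h) (fc π J₁ g * fc π J₂ h) := fun g h =>
      AddMonoidAlgebra.single_mul_single g h _ _
    simp_rw [h1]
    have h2 : ∀ g : Fin n → ZMod 2,
        (∑ h : Fin n → ZMod 2, AddMonoidAlgebra.single (g + h) (fc π J₁ g * fc π J₂ h))
        = ∑ k : Fin n → ZMod 2, AddMonoidAlgebra.single k (fc π J₁ g * fc π J₂ (g + k)) := by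
      intro g
      refine (Fintype.sum_equiv (Equiv.addLeft g)
        (fun k => AddMonoidAlgebra.single k (fc π J₁ g * fc π J₂ (g + k)))
        (fun h => AddMonoidAlgebra.single (g + h) (fc π J₁ g * fc π J₂ h))
        (fun k => ?_)).symm
      show AddMonoidAlgebra.single k _ =
        AddMonoidAlgebra.single (g + (g + k)) (fc π J₁ g * fc π J₂ (g + k))
      rw [← add_assoc, vadd_self, zero_add]
    simp_rw [h2]
    rw [Finset.sum_comm]
    refine Finset.sum_congr rfl fun k _ => ?_
    have := map_sum (AddMonoidAlgebra.singleAddHom k) (fun g => fc π J₁ g * fc π J₂ (g + k)) univ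
    simp only [AddMonoidAlgebra.singleAddHom_apply] at this
    rw [← this]
    show AddMonoidAlgebra.single k (fc π (J₁ + J₂) k)
      = AddMonoidAlgebra.single k (∑ g : Fin n → ZMod 2, fc π J₁ g * fc π J₂ (g + k))
    rw [fc_key π J₁ J₂ k]
  · unfold Fbar
    simp_rw [fc_zero]
    rw [Finset.sum_eq_single (0 : Fin n → ZMod 2)]
    · rw [if_pos rfl, AddMonoidAlgebra.one_def]
    · intro g _ hg
      rw [if_neg hg]
      exact AddMonoidAlgebra.single_zero g
    · intro h; exact absurd (Finset.mem_univ 0) h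
end

section
/- Fix a permutation π of V, J ∈ V, and an integer m ≥ 1. Suppose a^J_I = 0 for every I ∈ V with Hamming weight |I| > m. Then every nonzero coefficient is bounded below in absolute value: for every g ∈ V, if a^J_g ≠ 0 then |a^J_g| ≥ 1 / 2^{m−1}. -/
open Finset

namespace FCAux

lemma zmod2_cases (z : ZMod 2) : z = 0 ∨ z = 1 := by revert z; decide

variable {n : ℕ}

def chi (S : Finset (Fin n)) (x : Fin n → ZMod 2) : ℤ :=
  ∏ i ∈ S, (if x i = 1 then -1 else 1)

def supp (v : Fin n → ZMod 2) : Finset (Fin n) := univ.filter (fun i => v i = 1)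

lemma sum_supp (u x : Fin n → ZMod 2) : (∑ i, u i * x i) = ∑ i ∈ supp u, x i := by
  rw [supp, Finset.sum_filter]
  apply Finset.sum_congr rfl
  intro i _
  rcases zmod2_cases (u i) with h | h <;> simp [h]

lemma if_sum_eq_chi (S : Finset (Fin n)) (x : Fin n → ZMod 2) :
    (if (∑ i ∈ S, x i) = (1 : ZMod 2) then (-1 : ℤ) else 1) = chi S x := by
  classical
  induction S using Finset.induction with
  | empty => simp [chi]
  | insert _ _ ha ih =>
    rw [chi, Finset.prod_insert ha, Finset.sum_insert ha, ← chi, ← ih]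
    rcases zmod2_cases (x _) with h | h <;>
      rcases zmod2_cases (∑ i ∈ _, x i) with h2 | h2 <;>
      rw [h, h2] <;> norm_num <;> decide

lemma sgn_eq_chi (u x : Fin n → ZMod 2) : sgn u x = ((chi (supp u) x : ℤ) : ℝ) := by
  rw [sgn, sum_supp, ← if_sum_eq_chi]
  split <;> norm_num

lemma sum_chi (S : Finset (Fin n)) :
    ∑ x : Fin n → ZMod 2, chi S x = if S = ∅ then 2 ^ n else 0 := by
  rcases eq_or_ne S ∅ with rfl | hS
  · simp [chi, Finset.card_univ]
  · obtain ⟨j, hj⟩ := Finset.nonempty_iff_ne_empty.2 hS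
    rw [if_neg hS]
    set δ : Fin n → ZMod 2 := fun i => if i = j then 1 else 0 with hδ
    have key : ∀ x : Fin n → ZMod 2, chi S (δ + x) = - chi S x := by
      intro x
      rw [chi, chi, ← Finset.prod_erase_mul _ _ hj, ← Finset.prod_erase_mul _ _ hj]
      have h1 : ∀ i ∈ S.erase j,
          (if (δ + x) i = 1 then (-1 : ℤ) else 1) = (if x i = 1 then -1 else 1) := by
        intro i hi
        have hij : i ≠ j := Finset.ne_of_mem_erase hi
        simp [hδ, Pi.add_apply, hij]
      rw [Finset.prod_congr rfl h1]
      have hδj : (δ + x) j = 1 + x j := by simp [hδ]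
      rw [hδj]
      rcases zmod2_cases (x j) with h | h
      · rw [h]
        have h10 : (1 : ZMod 2) + 0 = 1 := by decide
        rw [h10]; simp
      · rw [h]
        have h11 : (1 : ZMod 2) + 1 = 0 := by decide
        rw [h11]
        rw [if_pos rfl, if_neg (by decide : ¬ (0 : ZMod 2) = 1)]; ring
    have heq : ∑ x : Fin n → ZMod 2, chi S x = - ∑ x : Fin n → ZMod 2, chi S x := by
      calc ∑ x : Fin n → ZMod 2, chi S x = ∑ x : Fin n → ZMod 2, chi S (δ + x) :=
            (Fintype.sum_equiv (Equiv.addLeft δ) _ _ (fun x => rfl)).symm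
        _ = ∑ x : Fin n → ZMod 2, (- chi S x) := Finset.sum_congr rfl (fun x _ => key x)
        _ = - ∑ x : Fin n → ZMod 2, chi S x := by simp
    linarith

def fz (π : Equiv.Perm (Fin n → ZMod 2)) (J : Fin n → ZMod 2)
    (x : Fin n → ZMod 2) : ℤ :=
  if (∑ i, π x i * J i) = (1 : ZMod 2) then 1 else 0

def C (π : Equiv.Perm (Fin n → ZMod 2)) (J : Fin n → ZMod 2)
    (S : Finset (Fin n)) : ℤ :=
  ∑ x : Fin n → ZMod 2, fz π J x * chi S x

lemma fc_eq (π : Equiv.Perm (Fin n → ZMod 2)) (J I : Fin n → ZMod 2) :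
    fc π J I = (1 / 2 ^ n) *
      (((if supp I = ∅ then (2 : ℤ) ^ n else 0) - 2 * C π J (supp I) : ℤ) : ℝ) := by
  rw [fc]
  congr 1
  have hx : ∀ x : Fin n → ZMod 2, sgn I x * sgn (π x) J
      = ((chi (supp I) x * (1 - 2 * fz π J x) : ℤ) : ℝ) := by
    intro x
    rw [sgn_eq_chi I x]
    have : sgn (π x) J = ((1 - 2 * fz π J x : ℤ) : ℝ) := by
      rw [sgn, fz]
      split <;> norm_num
    rw [this]
    push_cast
    ring
  rw [Finset.sum_congr rfl (fun x _ => hx x), ← Int.cast_sum]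
  congr 1
  rw [← sum_chi (supp I), C]
  simp only [Finset.mul_sum]
  rw [← Finset.sum_sub_distrib]
  exact Finset.sum_congr rfl fun x _ => by ring

def ind (S : Finset (Fin n)) : Fin n → ZMod 2 := fun i => if i ∈ S then 1 else 0

lemma supp_ind (S : Finset (Fin n)) : supp (ind S) = S := by
  ext i
  simp only [supp, ind, Finset.mem_filter, Finset.mem_univ, true_and]
  by_cases h : i ∈ S <;> simp [h]

lemma wt_eq (v : Fin n → ZMod 2) : wt v = (supp v).card := rfl

lemma C_vanish (π : Equiv.Perm (Fin n → ZMod 2)) (J : Fin n → ZMod 2) (m : ℕ)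
    (hloc : ∀ I : Fin n → ZMod 2, m < wt I → fc π J I = 0) :
    ∀ S : Finset (Fin n), m < S.card → C π J S = 0 := by
  intro S hS
  have hne : S ≠ ∅ := by
    intro h; rw [h, Finset.card_empty] at hS; omega
  have h0 := hloc (ind S) (by rw [wt_eq, supp_ind]; exact hS)
  rw [fc_eq, supp_ind, if_neg hne] at h0
  have h2 : ((0 - 2 * C π J S : ℤ) : ℝ) = 0 := by
    rcases mul_eq_zero.mp h0 with h | h
    · exfalso
      have hpos : (0 : ℝ) < 1 / 2 ^ n := by positivity
      rw [h] at hpos; exact lt_irrefl 0 hpos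
    · exact h
  push_cast at h2
  have : (C π J S : ℝ) = 0 := by linarith
  exact_mod_cast this

lemma dvd_sum_chi (S : Finset (Fin n)) (x : Fin n → ZMod 2) :
    (2 : ℤ) ^ (n - S.card) ∣ ∑ T ∈ univ.filter (fun T => S ⊆ T), chi T x := by
  have hbij : ∑ T ∈ univ.filter (fun T => S ⊆ T), chi T x
      = ∑ R ∈ Sᶜ.powerset, chi (S ∪ R) x := by
    apply Finset.sum_nbij' (fun T => T \ S) (fun R => S ∪ R)
    · intro T hT
      simp only [Finset.mem_filter, Finset.mem_univ, true_and] at hT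
      simp only [Finset.mem_powerset]
      intro i hi
      simp only [Finset.mem_sdiff] at hi
      simp [Finset.mem_compl, hi.2]
    · intro R hR
      simp [Finset.subset_union_left]
    · intro T hT
      simp only [Finset.mem_filter, Finset.mem_univ, true_and] at hT
      exact Finset.union_sdiff_of_subset hT
    · intro R hR
      simp only [Finset.mem_powerset] at hR
      apply Finset.union_sdiff_cancel_left
      exact Finset.disjoint_right.mpr fun a haR => by
        have := hR haR
        simpa [Finset.mem_compl] using this
    · intro T hT
      simp only [Finset.mem_filter, Finset.mem_univ, true_and] at hT
      rw [Finset.union_sdiff_of_subset hT]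
  rw [hbij]
  have hdisj : ∀ R ∈ Sᶜ.powerset, chi (S ∪ R) x = chi S x * chi R x := by
    intro R hR
    simp only [Finset.mem_powerset] at hR
    have hD : Disjoint S R := Finset.disjoint_right.mpr fun a haR => by
      have := hR haR
      simpa [Finset.mem_compl] using this
    rw [chi, chi, chi, ← Finset.prod_union hD]
  rw [Finset.sum_congr rfl hdisj, ← Finset.mul_sum]
  have hps : ∑ R ∈ Sᶜ.powerset, chi R x
      = ∏ i ∈ Sᶜ, ((if x i = 1 then (-1 : ℤ) else 1) + 1) := by
    rw [Finset.prod_add]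
    apply Finset.sum_congr rfl
    intro t ht
    simp [chi]
  have hd : (2 : ℤ) ^ (n - S.card) ∣ ∑ R ∈ Sᶜ.powerset, chi R x := by
    rw [hps]
    have hcard : Sᶜ.card = n - S.card := by
      rw [Finset.card_compl, Fintype.card_fin]
    have := Finset.prod_dvd_prod_of_dvd (s := Sᶜ) (fun _ => (2 : ℤ))
      (fun i => ((if x i = 1 then (-1 : ℤ) else 1) + 1))
      (by
        intro i _
        rcases zmod2_cases (x i) with h | h <;> simp [h])
    rwa [Finset.prod_const, hcard] at this
  exact hd.mul_left _

lemma superset_sum_eq (π : Equiv.Perm (Fin n → ZMod 2)) (J : Fin n → ZMod 2)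
    (S : Finset (Fin n)) :
    ∑ T ∈ univ.filter (fun T => S ⊆ T), C π J T
      = ∑ x : Fin n → ZMod 2, fz π J x * ∑ T ∈ univ.filter (fun T => S ⊆ T), chi T x := by
  simp only [C]
  rw [Finset.sum_comm]
  apply Finset.sum_congr rfl
  intro x _
  rw [Finset.mul_sum]

lemma superset_sum_dvd (π : Equiv.Perm (Fin n → ZMod 2)) (J : Fin n → ZMod 2)
    (S : Finset (Fin n)) :
    (2 : ℤ) ^ (n - S.card) ∣ ∑ T ∈ univ.filter (fun T => S ⊆ T), C π J T := by
  rw [superset_sum_eq]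
  exact Finset.dvd_sum fun x _ => (dvd_sum_chi S x).mul_left _

lemma filter_superset_eq (S : Finset (Fin n)) :
    univ.filter (fun T => S ⊆ T) = insert S (univ.filter (fun T => S ⊂ T)) := by
  ext T
  simp only [Finset.mem_filter, Finset.mem_univ, true_and, Finset.mem_insert]
  constructor
  · intro h
    rcases h.ssubset_or_eq with h1 | h1
    · exact Or.inr h1
    · exact Or.inl h1.symm
  · rintro (rfl | h)
    · exact Finset.Subset.refl _
    · exact h.subset

lemma C_dvd (π : Equiv.Perm (Fin n → ZMod 2)) (J : Fin n → ZMod 2) (m : ℕ)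
    (hC : ∀ S : Finset (Fin n), m < S.card → C π J S = 0) :
    ∀ S : Finset (Fin n), (2 : ℤ) ^ (n - m) ∣ C π J S := by
  suffices h : ∀ k : ℕ, ∀ S : Finset (Fin n), n - S.card ≤ k → (2 : ℤ) ^ (n - m) ∣ C π J S by
    intro S
    exact h n S (by omega)
  intro k
  induction k with
  | zero =>
    intro S hS
    have hcard : S.card ≤ n := by
      simpa using Finset.card_le_card (Finset.subset_univ S)
    have hSn : S.card = n := by omega
    by_cases hmn : m < n
    · rw [hC S (by omega)]
      exact dvd_zero _
    · have h0 : n - m = 0 := by omega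
      rw [h0, pow_zero]
      exact one_dvd _
  | succ k ih =>
    intro S hS
    by_cases hSm : m < S.card
    · rw [hC S hSm]
      exact dvd_zero _
    · have hcard : S.card ≤ n := by
        simpa using Finset.card_le_card (Finset.subset_univ S)
      have hsplit : ∑ T ∈ univ.filter (fun T => S ⊆ T), C π J T
          = C π J S + ∑ T ∈ univ.filter (fun T => S ⊂ T), C π J T := by
        rw [filter_superset_eq, Finset.sum_insert (by
          simp only [Finset.mem_filter, Finset.mem_univ, true_and]
          exact ssubset_irrefl S)]
      have h1 : (2 : ℤ) ^ (n - m) ∣ ∑ T ∈ univ.filter (fun T => S ⊆ T), C π J T :=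
        (pow_dvd_pow 2 (by omega : n - m ≤ n - S.card)).trans (superset_sum_dvd π J S)
      have h2 : (2 : ℤ) ^ (n - m) ∣ ∑ T ∈ univ.filter (fun T => S ⊂ T), C π J T := by
        apply Finset.dvd_sum
        intro T hT
        simp only [Finset.mem_filter, Finset.mem_univ, true_and] at hT
        have hTcard : T.card ≤ n := by
          simpa using Finset.card_le_card (Finset.subset_univ T)
        have hlt : S.card < T.card := Finset.card_lt_card hT
        exact ih T (by omega)
      have := dvd_sub h1 h2
      rw [hsplit] at this
      simpa using this

end FCAux

/-- If all Fourier coefficients of J vanish above locality m, then every nonzero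
coefficient has absolute value at least 1/2^(m-1). -/
theorem fc_nonzero_lower_bound {n : ℕ} (hn : 1 ≤ n) (π : Equiv.Perm (Fin n → ZMod 2))
    (J : Fin n → ZMod 2) (m : ℕ) (hm : 1 ≤ m)
    (hloc : ∀ I : Fin n → ZMod 2, m < wt I → fc π J I = 0) :
    ∀ g : Fin n → ZMod 2, fc π J g ≠ 0 → 1 / 2 ^ (m - 1) ≤ |fc π J g| := by
  intro g hg
  have hC := FCAux.C_vanish π J m hloc
  have hdvdC := FCAux.C_dvd π J m hC (FCAux.supp g)
  have hfc := FCAux.fc_eq π J g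
  set A : ℤ := (if FCAux.supp g = ∅ then (2 : ℤ) ^ n else 0)
      - 2 * FCAux.C π J (FCAux.supp g) with hA
  have hdvdA : (2 : ℤ) ^ (n - m + 1) ∣ A := by
    rw [hA]
    apply dvd_sub
    · split
      · exact pow_dvd_pow 2 (by omega)
      · exact dvd_zero _
    · rw [pow_succ']
      exact mul_dvd_mul_left 2 hdvdC
  have hAne : A ≠ 0 := by
    intro h0
    apply hg
    rw [hfc, h0]
    simp
  have habs : (2 : ℤ) ^ (n - m + 1) ≤ |A| :=
    Int.le_of_dvd (abs_pos.mpr hAne) ((dvd_abs _ _).mpr hdvdA)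
  have h1 : ((2 : ℝ)) ^ (n - m + 1) ≤ |(A : ℝ)| := by
    rw [← Int.cast_abs]
    exact_mod_cast habs
  rw [hfc, abs_mul]
  have h2 : |(1 : ℝ) / 2 ^ n| = 1 / 2 ^ n := abs_of_pos (by positivity)
  rw [h2]
  calc (1 : ℝ) / 2 ^ (m - 1) ≤ (1 / 2 ^ n) * 2 ^ (n - m + 1) := by
        rw [one_div_mul_eq_div, div_le_div_iff₀ (by positivity) (by positivity),
          one_mul, ← pow_add]
        exact pow_le_pow_right₀ one_le_two (by omega)
    _ ≤ (1 / 2 ^ n) * |(A : ℝ)| := by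
        apply mul_le_mul_of_nonneg_left h1 (by positivity)
end
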